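/- arXiv:1209.3048 — 5 statements merged into one kernel-verified Lean document; each statement's English description precedes it below -/
import Mathlib

section
/- Let A, B, C, D > 0 and suppose the quadratic C - D·y + (A+B)·y² = 0 has two distinct roots y₁ < y₂. Then for positive solutions (x₁, x₂) of x₁' = -C - A·(x₁/x₂)², x₂' = -D + B·(x₁/x₂), the ratio y = x₁/x₂ is strictly increasing on any time interval where y₁ < y(t) < y₂, and strictly decreasing on any time interval where y(t) < y₁ or y(t) > y₂. -/
theorem stmt4 (A B C D y₁ y₂ : ℝ) (hA : 0 < A) (hB : 0 < B) (hC : 0 < C) (hD : 0 < D)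
    (hroots : ∀ y : ℝ, C - D * y + (A + B) * y ^ 2 = 0 ↔ y = y₁ ∨ y = y₂)
    (h12 : y₁ < y₂)
    (I : Set ℝ) (x₁ x₂ : ℝ → ℝ)
    (hpos₁ : ∀ t ∈ I, 0 < x₁ t) (hpos₂ : ∀ t ∈ I, 0 < x₂ t)
    (hode₁ : ∀ t ∈ I, HasDerivAt x₁ (-C - A * (x₁ t / x₂ t) ^ 2) t)
    (hode₂ : ∀ t ∈ I, HasDerivAt x₂ (-D + B * (x₁ t / x₂ t)) t) :
    (∀ J : Set ℝ, J ⊆ I → J.OrdConnected →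
      (∀ t ∈ J, y₁ < x₁ t / x₂ t ∧ x₁ t / x₂ t < y₂) →
      StrictMonoOn (fun t => x₁ t / x₂ t) J) ∧
    (∀ J : Set ℝ, J ⊆ I → J.OrdConnected →
      (∀ t ∈ J, x₁ t / x₂ t < y₁ ∨ y₂ < x₁ t / x₂ t) →
      StrictAntiOn (fun t => x₁ t / x₂ t) J) := by
  have h1 := (hroots y₁).mpr (Or.inl rfl)
  have h2 := (hroots y₂).mpr (Or.inr rfl)
  have hne : y₂ - y₁ ≠ 0 := sub_ne_zero.mpr h12.ne'
  have hDsum : D = (A + B) * (y₁ + y₂) := by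
    have key : (y₂ - y₁) * D = (y₂ - y₁) * ((A + B) * (y₁ + y₂)) := by
      linear_combination h1 - h2
    exact mul_left_cancel₀ hne key
  have hCprod : C = (A + B) * (y₁ * y₂) := by
    linear_combination h1 + y₁ * hDsum
  have hfac : ∀ y : ℝ, C - D * y + (A + B) * y ^ 2 = (A + B) * (y - y₁) * (y - y₂) := by
    intro y; rw [hDsum, hCprod]; ring
  -- derivative of the ratio
  have hder : ∀ t ∈ I, HasDerivAt (fun t => x₁ t / x₂ t)
      (-((A + B) * (x₁ t / x₂ t - y₁) * (x₁ t / x₂ t - y₂)) / x₂ t) t := by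
    intro t ht
    have hx2 := hpos₂ t ht
    have h := (hode₁ t ht).div (hode₂ t ht) hx2.ne'
    refine h.congr_deriv ?_
    symm
    rw [← hfac]
    field_simp
    ring
  have hcont : ∀ J : Set ℝ, J ⊆ I → ContinuousOn (fun t => x₁ t / x₂ t) J := by
    intro J hJI t ht
    exact ((hder t (hJI ht)).continuousAt).continuousWithinAt
  have hderiv : ∀ t ∈ I, deriv (fun t => x₁ t / x₂ t) t
      = -((A + B) * (x₁ t / x₂ t - y₁) * (x₁ t / x₂ t - y₂)) / x₂ t := by
    intro t ht; exact (hder t ht).deriv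
  constructor
  · intro J hJI hJoc hbet
    refine strictMonoOn_of_deriv_pos hJoc.convex (hcont J hJI) ?_
    intro t ht
    have ht' : t ∈ J := interior_subset ht
    rw [hderiv t (hJI ht')]
    have hx2 := hpos₂ t (hJI ht')
    have hb := hbet t ht'
    apply div_pos _ hx2
    have : (A + B) * (x₁ t / x₂ t - y₁) * (x₁ t / x₂ t - y₂) < 0 := by
      have := mul_pos (mul_pos (by linarith : (0:ℝ) < A + B) (by linarith [hb.1] : (0:ℝ) < x₁ t / x₂ t - y₁)) (by linarith [hb.2] : (0:ℝ) < y₂ - x₁ t / x₂ t)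
      nlinarith
    linarith
  · intro J hJI hJoc hout
    refine strictAntiOn_of_deriv_neg hJoc.convex (hcont J hJI) ?_
    intro t ht
    have ht' : t ∈ J := interior_subset ht
    rw [hderiv t (hJI ht')]
    have hx2 := hpos₂ t (hJI ht')
    apply div_neg_of_neg_of_pos _ hx2
    have hQ : 0 < (A + B) * (x₁ t / x₂ t - y₁) * (x₁ t / x₂ t - y₂) := by
      rcases hout t ht' with h | h
      · have h1 : x₁ t / x₂ t - y₁ < 0 := by linarith
        have h2 : x₁ t / x₂ t - y₂ < 0 := by linarith
        exact mul_pos_of_neg_of_neg (mul_neg_of_pos_of_neg (by linarith) h1) h2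
      · have h1 : 0 < x₁ t / x₂ t - y₁ := by linarith
        have h2 : 0 < x₁ t / x₂ t - y₂ := by linarith
        exact mul_pos (mul_pos (by linarith) h1) h2
    linarith
end

section
/- Let A, B, D > 0 (case C = 0) and set ȳ = D/(A+B). For positive solutions of x₁' = -A·y², x₂' = -D + B·y with y = x₁/x₂, the ratio satisfies y' = -(A+B)·(y/x₂)·(y - ȳ). Consequently, if y(0) < ȳ then y is strictly increasing, and if y(0) > ȳ then y is strictly decreasing, on the interval of existence where 0 < y ≠ ȳ. -/
theorem stmt7 (A B D : ℝ) (hA : 0 < A) (hB : 0 < B) (hD : 0 < D)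
    (I : Set ℝ) (hI : I.OrdConnected) (x₁ x₂ : ℝ → ℝ)
    (hpos₁ : ∀ t ∈ I, 0 < x₁ t) (hpos₂ : ∀ t ∈ I, 0 < x₂ t)
    (hode₁ : ∀ t ∈ I, HasDerivAt x₁ (-A * (x₁ t / x₂ t) ^ 2) t)
    (hode₂ : ∀ t ∈ I, HasDerivAt x₂ (-D + B * (x₁ t / x₂ t)) t) :
    (∀ t ∈ I, HasDerivAt (fun s => x₁ s / x₂ s)
      (-(A + B) * ((x₁ t / x₂ t) / x₂ t) * (x₁ t / x₂ t - D / (A + B))) t) ∧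
    ((∀ t ∈ I, 0 < x₁ t / x₂ t ∧ x₁ t / x₂ t < D / (A + B)) →
      StrictMonoOn (fun t => x₁ t / x₂ t) I) ∧
    ((∀ t ∈ I, D / (A + B) < x₁ t / x₂ t) →
      StrictAntiOn (fun t => x₁ t / x₂ t) I) := by
  have hAB : (0:ℝ) < A + B := by linarith
  have hderiv : ∀ t ∈ I, HasDerivAt (fun s => x₁ s / x₂ s)
      (-(A + B) * ((x₁ t / x₂ t) / x₂ t) * (x₁ t / x₂ t - D / (A + B))) t := by
    intro t ht
    have h2 := (hpos₂ t ht).ne'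
    have := (hode₁ t ht).div (hode₂ t ht) h2
    refine this.congr_deriv ?_
    field_simp
    ring
  have hconv : Convex ℝ I := convex_iff_ordConnected.2 hI
  refine ⟨hderiv, ?_, ?_⟩
  · intro hy
    refine strictMonoOn_of_hasDerivWithinAt_pos hconv
      (fun t ht => ((hderiv t ht).continuousAt).continuousWithinAt)
      (fun t ht => ((hderiv t (interior_subset ht)).hasDerivWithinAt)) ?_
    intro t ht
    have ht' := interior_subset ht
    have h2 := hpos₂ t ht'
    obtain ⟨hy1, hy2⟩ := hy t ht'
    have hq : 0 < (x₁ t / x₂ t) / x₂ t := div_pos hy1 h2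
    have h := mul_pos (mul_pos hAB hq) (sub_pos.2 hy2)
    have heq : -(A + B) * ((x₁ t / x₂ t) / x₂ t) * (x₁ t / x₂ t - D / (A + B))
        = (A + B) * ((x₁ t / x₂ t) / x₂ t) * (D / (A + B) - x₁ t / x₂ t) := by ring
    linarith
  · intro hy
    refine strictAntiOn_of_hasDerivWithinAt_neg hconv
      (fun t ht => ((hderiv t ht).continuousAt).continuousWithinAt)
      (fun t ht => ((hderiv t (interior_subset ht)).hasDerivWithinAt)) ?_
    intro t ht
    have ht' := interior_subset ht
    have h2 := hpos₂ t ht'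
    have hy1 := hy t ht'
    have hy0 : 0 < x₁ t / x₂ t := lt_trans (div_pos hD hAB) hy1
    have hq : 0 < (x₁ t / x₂ t) / x₂ t := div_pos hy0 h2
    have h := mul_pos (mul_pos hAB hq) (sub_pos.2 hy1)
    have heq : -(A + B) * ((x₁ t / x₂ t) / x₂ t) * (x₁ t / x₂ t - D / (A + B))
        = -((A + B) * ((x₁ t / x₂ t) / x₂ t) * (x₁ t / x₂ t - D / (A + B))) := by ring
    linarith
end

section
/- Let A, B, D > 0, ȳ = D/(A+B), and let (x₁, x₂) be a positive solution of x₁' = -A·(x₁/x₂)², x₂' = -D + B·(x₁/x₂) with x₁(0)/x₂(0) < ȳ. Then x₂'(t) < -D + B·ȳ < 0 for all t in the interval of existence, hence x₂(t) < x₂(0) - (D - B·ȳ)·t and the maximal existence time is finite. -/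
theorem stmt8 (A B D T : ℝ) (hA : 0 < A) (hB : 0 < B) (hD : 0 < D) (hT : 0 < T)
    (x₁ x₂ : ℝ → ℝ)
    (hpos₁ : ∀ t ∈ Set.Ico (0:ℝ) T, 0 < x₁ t)
    (hpos₂ : ∀ t ∈ Set.Ico (0:ℝ) T, 0 < x₂ t)
    (hode₁ : ∀ t ∈ Set.Ico (0:ℝ) T,
      HasDerivAt x₁ (-A * (x₁ t / x₂ t) ^ 2) t)
    (hode₂ : ∀ t ∈ Set.Ico (0:ℝ) T,
      HasDerivAt x₂ (-D + B * (x₁ t / x₂ t)) t)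
    (hinit : x₁ 0 / x₂ 0 < D / (A + B)) :
    (∀ t ∈ Set.Ico (0:ℝ) T,
      -D + B * (x₁ t / x₂ t) < -D + B * (D / (A + B)) ∧
      -D + B * (D / (A + B)) < 0) ∧
    (∀ t ∈ Set.Ioo (0:ℝ) T, x₂ t < x₂ 0 - (D - B * (D / (A + B))) * t) ∧
    T ≤ x₂ 0 / (D - B * (D / (A + B))) := by
  have hAB : (0:ℝ) < A + B := by linarith
  set Y : ℝ := D / (A + B) with hYdef
  have hY : 0 < Y := div_pos hD hAB
  have hKpos : 0 < D - B * Y := by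
    have : D - B * Y = A * D / (A + B) := by rw [hYdef]; field_simp; ring
    rw [this]; positivity
  -- continuity
  have hcont₁ : ∀ t ∈ Set.Ico (0:ℝ) T, ContinuousAt x₁ t :=
    fun t ht => (hode₁ t ht).continuousAt
  have hcont₂ : ∀ t ∈ Set.Ico (0:ℝ) T, ContinuousAt x₂ t :=
    fun t ht => (hode₂ t ht).continuousAt
  -- the auxiliary function
  set u : ℝ → ℝ := fun t => Y * x₂ t - x₁ t with hudef
  have h0mem : (0:ℝ) ∈ Set.Ico (0:ℝ) T := ⟨le_refl _, hT⟩
  have hu0 : 0 < u 0 := by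
    have h2 := hpos₂ 0 h0mem
    have := (div_lt_iff₀ h2).mp hinit
    simp only [hudef]; linarith
  have hu' : ∀ t ∈ Set.Ico (0:ℝ) T,
      HasDerivAt u (-((A * (x₁ t / x₂ t) + D) / x₂ t) * u t) t := by
    intro t ht
    have h2 : HasDerivAt (fun t => Y * x₂ t) (Y * (-D + B * (x₁ t / x₂ t))) t :=
      (hode₂ t ht).const_mul Y
    have h := h2.sub (hode₁ t ht)
    refine h.congr_deriv ?_
    have hx2 : x₂ t ≠ 0 := (hpos₂ t ht).ne'
    have hABne : A + B ≠ 0 := hAB.ne'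
    simp only [hudef, hYdef]
    field_simp
    ring
  -- Key invariance: x₁/x₂ < Y on [0,T)
  have key : ∀ t ∈ Set.Ico (0:ℝ) T, x₁ t / x₂ t < Y := by
    by_contra hcon
    push_neg at hcon
    obtain ⟨s₀, hs₀, hges⟩ := hcon
    have hus₀ : u s₀ ≤ 0 := by
      have h2 := hpos₂ s₀ hs₀
      have := (le_div_iff₀ h2).mp hges
      simp only [hudef]; linarith
    have hIccsub : Set.Icc (0:ℝ) s₀ ⊆ Set.Ico (0:ℝ) T :=
      fun t ht => ⟨ht.1, lt_of_le_of_lt ht.2 hs₀.2⟩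
    have hucont : ContinuousOn u (Set.Icc 0 s₀) := by
      intro t ht
      have hc : ContinuousAt u t :=
        ((hcont₂ t (hIccsub ht)).const_mul Y).sub (hcont₁ t (hIccsub ht))
      exact hc.continuousWithinAt
    -- the bad set
    set S : Set ℝ := {t ∈ Set.Icc (0:ℝ) s₀ | u t ≤ 0} with hSdef
    have hSclosed : IsClosed S := by
      have : S = Set.Icc (0:ℝ) s₀ ∩ u ⁻¹' Set.Iic 0 := by
        ext t; simp [hSdef, Set.mem_sep_iff, and_comm]
      rw [this]
      exact ContinuousOn.preimage_isClosed_of_isClosed hucont isClosed_Icc isClosed_Iic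
    have hSne : S.Nonempty := ⟨s₀, ⟨⟨hs₀.1, le_refl _⟩, hus₀⟩⟩
    have hSbdd : BddBelow S := ⟨0, fun t ht => ht.1.1⟩
    set t₀ : ℝ := sInf S with ht₀def
    have ht₀S : t₀ ∈ S := hSclosed.csInf_mem hSne hSbdd
    have ht₀Icc : t₀ ∈ Set.Icc (0:ℝ) s₀ := ht₀S.1
    have hut₀ : u t₀ ≤ 0 := ht₀S.2
    have ht₀pos : 0 < t₀ := by
      rcases lt_or_eq_of_le ht₀Icc.1 with h | h
      · exact h
      · exfalso; rw [← h] at hut₀; linarith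
    have hIccsub' : Set.Icc (0:ℝ) t₀ ⊆ Set.Ico (0:ℝ) T :=
      fun t ht => hIccsub ⟨ht.1, le_trans ht.2 ht₀Icc.2⟩
    have hupos : ∀ t ∈ Set.Ico (0:ℝ) t₀, 0 < u t := by
      intro t ht
      by_contra hle
      push_neg at hle
      have : t ∈ S := ⟨⟨ht.1, le_trans ht.2.le ht₀Icc.2⟩, hle⟩
      have := csInf_le hSbdd this
      linarith [ht.2]
    -- bound on the coefficient
    set c : ℝ → ℝ := fun t => (A * (x₁ t / x₂ t) + D) / x₂ t with hcdef
    have hccont : ContinuousOn c (Set.Icc 0 t₀) := by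
      intro t ht
      have h1 := (hcont₁ t (hIccsub' ht)).continuousWithinAt
        (s := Set.Icc (0:ℝ) t₀)
      have h2 := (hcont₂ t (hIccsub' ht)).continuousWithinAt
        (s := Set.Icc (0:ℝ) t₀)
      have hx2 : x₂ t ≠ 0 := (hpos₂ t (hIccsub' ht)).ne'
      exact (((h1.div h2 hx2).const_smul A |>.add continuousWithinAt_const).div h2 hx2)
    obtain ⟨m, hm, hmax'⟩ := isCompact_Icc.exists_isMaxOn
      (Set.nonempty_Icc.mpr ht₀Icc.1) hccont
    have hmax : ∀ x ∈ Set.Icc (0:ℝ) t₀, c x ≤ c m := fun x hx => hmax' hx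
    set M : ℝ := c m with hMdef
    -- the exponential comparison function
    set f : ℝ → ℝ := fun t => u t * Real.exp (M * t) with hfdef
    have hf' : ∀ t ∈ Set.Icc (0:ℝ) t₀,
        HasDerivAt f ((M - c t) * u t * Real.exp (M * t)) t := by
      intro t ht
      have hMt : HasDerivAt (fun t : ℝ => M * t) M t := by
        simpa using (hasDerivAt_id t).const_mul M
      have he : HasDerivAt (fun t => Real.exp (M * t)) (Real.exp (M * t) * M) t :=
        hMt.exp
      have := (hu' t (hIccsub' ht)).mul he
      refine this.congr_deriv ?_
      simp only [hcdef]
      ring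
    have hfmono : MonotoneOn f (Set.Icc 0 t₀) := by
      apply monotoneOn_of_deriv_nonneg (convex_Icc _ _)
      · intro t ht
        exact ((hf' t ht).continuousAt).continuousWithinAt
      · intro t ht
        rw [interior_Icc] at ht
        exact (hf' t (Set.mem_Icc_of_Ioo ht)).differentiableAt.differentiableWithinAt
      · intro t ht
        rw [interior_Icc] at ht
        rw [(hf' t (Set.mem_Icc_of_Ioo ht)).deriv]
        have hut : 0 < u t := hupos t ⟨ht.1.le, ht.2⟩
        have hMt : c t ≤ M := hmax t (Set.mem_Icc_of_Ioo ht)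
        have : 0 ≤ M - c t := by linarith
        positivity
    have hle : f 0 ≤ f t₀ :=
      hfmono ⟨le_refl _, ht₀Icc.1⟩ ⟨ht₀Icc.1, le_refl _⟩ ht₀Icc.1
    have hf0 : 0 < f 0 := by
      simp only [hfdef]
      have : Real.exp (M * 0) = 1 := by norm_num
      rw [this]; linarith
    have hft₀ : f t₀ ≤ 0 := by
      simp only [hfdef]
      exact mul_nonpos_of_nonpos_of_nonneg hut₀ (Real.exp_pos _).le
    linarith
  -- Part 1
  have part1 : ∀ t ∈ Set.Ico (0:ℝ) T,
      -D + B * (x₁ t / x₂ t) < -D + B * Y ∧ -D + B * Y < 0 := by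
    intro t ht
    constructor
    · have := key t ht
      nlinarith
    · linarith
  refine ⟨part1, ?_, ?_⟩
  · -- Part 2
    intro t ht
    have htT : Set.Icc (0:ℝ) t ⊆ Set.Ico (0:ℝ) T :=
      fun s hs => ⟨hs.1, lt_of_le_of_lt hs.2 ht.2⟩
    set g : ℝ → ℝ := fun s => x₂ s + (D - B * Y) * s with hgdef
    have hg' : ∀ s ∈ Set.Icc (0:ℝ) t,
        HasDerivAt g ((-D + B * (x₁ s / x₂ s)) + (D - B * Y)) s := by
      intro s hs
      have hl : HasDerivAt (fun r : ℝ => (D - B * Y) * r) (D - B * Y) s := by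
        simpa using (hasDerivAt_id s).const_mul (D - B * Y)
      exact (hode₂ s (htT hs)).add hl
    have hganti : StrictAntiOn g (Set.Icc 0 t) := by
      apply strictAntiOn_of_deriv_neg (convex_Icc _ _)
      · intro s hs
        exact ((hg' s hs).continuousAt).continuousWithinAt
      · intro s hs
        rw [interior_Icc] at hs
        rw [(hg' s (Set.mem_Icc_of_Ioo hs)).deriv]
        have h1 := (part1 s (htT (Set.mem_Icc_of_Ioo hs))).1
        linarith
    have := hganti ⟨le_refl _, ht.1.le⟩ ⟨ht.1.le, le_refl _⟩ ht.1
    simp only [hgdef] at this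
    linarith
  · -- Part 3
    by_contra hcon
    push_neg at hcon
    have hx20 : 0 < x₂ 0 := hpos₂ 0 h0mem
    set s : ℝ := x₂ 0 / (D - B * Y) with hsdef
    have hspos : 0 < s := div_pos hx20 hKpos
    have hsT : s < T := hcon
    have hsIoo : s ∈ Set.Ioo (0:ℝ) T := ⟨hspos, hsT⟩
    have h1 : x₂ s < x₂ 0 - (D - B * Y) * s := by
      have := hT
      -- use part 2 (already proven above as local statement)
      -- re-derive:
      have htT : Set.Icc (0:ℝ) s ⊆ Set.Ico (0:ℝ) T :=
        fun r hr => ⟨hr.1, lt_of_le_of_lt hr.2 hsT⟩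
      set g : ℝ → ℝ := fun r => x₂ r + (D - B * Y) * r with hgdef
      have hg' : ∀ r ∈ Set.Icc (0:ℝ) s,
          HasDerivAt g ((-D + B * (x₁ r / x₂ r)) + (D - B * Y)) r := by
        intro r hr
        have hl : HasDerivAt (fun q : ℝ => (D - B * Y) * q) (D - B * Y) r := by
          simpa using (hasDerivAt_id r).const_mul (D - B * Y)
        exact (hode₂ r (htT hr)).add hl
      have hganti : StrictAntiOn g (Set.Icc 0 s) := by
        apply strictAntiOn_of_deriv_neg (convex_Icc _ _)
        · intro r hr
          exact ((hg' r hr).continuousAt).continuousWithinAt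
        · intro r hr
          rw [interior_Icc] at hr
          rw [(hg' r (Set.mem_Icc_of_Ioo hr)).deriv]
          have h1 := (part1 r (htT (Set.mem_Icc_of_Ioo hr))).1
          linarith
      have := hganti ⟨le_refl _, hspos.le⟩ ⟨hspos.le, le_refl _⟩ hspos
      simp only [hgdef] at this
      linarith
    have h2 : 0 < x₂ s := hpos₂ s ⟨hspos.le, hsT⟩
    have h3 : (D - B * Y) * s = x₂ 0 := by
      rw [hsdef]; field_simp
    linarith
end

section
/- Let A, B, C, D > 0 with two distinct roots y₁ < y₂ of C - Dy + (A+B)y² = 0. Define, for a positive solution (x₁, x₂) of the system x₁' = -C - A·y², x₂' = -D + B·y (y = x₁/x₂) with y(t) ∉ {y₁, y₂}, the quantity Λ(t) = (1/x₂(t))·|y(t) - y₁|^{-(1/(A+B))(B + (D - B y₂)/(y₂ - y₁))}·|y₂ - y(t)|^{(1/(A+B))·(D - B y₂)/(y₂ - y₁)}. Then Λ is constant in t. -/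
set_option maxHeartbeats 1000000 in
theorem stmt9 (A B C D y₁ y₂ : ℝ) (hA : 0 < A) (hB : 0 < B) (hC : 0 < C) (hD : 0 < D)
    (hroot₁ : C - D * y₁ + (A + B) * y₁ ^ 2 = 0)
    (hroot₂ : C - D * y₂ + (A + B) * y₂ ^ 2 = 0)
    (h12 : y₁ < y₂)
    (I : Set ℝ) (hI : I.OrdConnected) (x₁ x₂ : ℝ → ℝ)
    (hpos₁ : ∀ t ∈ I, 0 < x₁ t) (hpos₂ : ∀ t ∈ I, 0 < x₂ t)
    (hode₁ : ∀ t ∈ I, HasDerivAt x₁ (-C - A * (x₁ t / x₂ t) ^ 2) t)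
    (hode₂ : ∀ t ∈ I, HasDerivAt x₂ (-D + B * (x₁ t / x₂ t)) t)
    (hne : ∀ t ∈ I, x₁ t / x₂ t ≠ y₁ ∧ x₁ t / x₂ t ≠ y₂) :
    ∀ s ∈ I, ∀ t ∈ I,
      (1 / x₂ s) *
        |x₁ s / x₂ s - y₁| ^ (-(1 / (A + B)) * (B + (D - B * y₂) / (y₂ - y₁))) *
        |y₂ - x₁ s / x₂ s| ^ ((1 / (A + B)) * ((D - B * y₂) / (y₂ - y₁))) =
      (1 / x₂ t) *
        |x₁ t / x₂ t - y₁| ^ (-(1 / (A + B)) * (B + (D - B * y₂) / (y₂ - y₁))) *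
        |y₂ - x₁ t / x₂ t| ^ ((1 / (A + B)) * ((D - B * y₂) / (y₂ - y₁))) := by
  have h21 : y₂ - y₁ ≠ 0 := sub_ne_zero.2 h12.ne'
  have hAB : A + B ≠ 0 := by positivity
  -- Vieta-type relations
  have hDv : D = (A + B) * (y₁ + y₂) := by
    have h : D * (y₂ - y₁) = (A + B) * (y₁ + y₂) * (y₂ - y₁) := by
      linear_combination hroot₁ - hroot₂
    exact mul_right_cancel₀ h21 h
  have hCv : C = (A + B) * (y₁ * y₂) := by
    have : C = D * y₁ - (A + B) * y₁ ^ 2 := by linarith [hroot₁]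
    rw [this, hDv]; ring
  set p : ℝ := -(1 / (A + B)) * (B + (D - B * y₂) / (y₂ - y₁)) with hp
  set q : ℝ := (1 / (A + B)) * ((D - B * y₂) / (y₂ - y₁)) with hq
  set g : ℝ → ℝ := fun t =>
    -Real.log (x₂ t) + p * Real.log (x₁ t / x₂ t - y₁)
      + q * Real.log (y₂ - x₁ t / x₂ t) with hg
  have hgderiv : ∀ t ∈ I, HasDerivAt g 0 t := by
    intro t ht
    have hv : x₂ t ≠ 0 := (hpos₂ t ht).ne'
    have hne1 : x₁ t / x₂ t - y₁ ≠ 0 := sub_ne_zero.2 (hne t ht).1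
    have hne2 : y₂ - x₁ t / x₂ t ≠ 0 := sub_ne_zero.2 (Ne.symm (hne t ht).2)
    have hy : HasDerivAt (fun t => x₁ t / x₂ t)
        (((-C - A * (x₁ t / x₂ t) ^ 2) * x₂ t -
          x₁ t * (-D + B * (x₁ t / x₂ t))) / (x₂ t) ^ 2) t :=
      (hode₁ t ht).div (hode₂ t ht) hv
    have h1 : HasDerivAt (fun t => Real.log (x₂ t))
        ((-D + B * (x₁ t / x₂ t)) / x₂ t) t := (hode₂ t ht).log hv
    have h2 : HasDerivAt (fun t => Real.log (x₁ t / x₂ t - y₁))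
        ((((-C - A * (x₁ t / x₂ t) ^ 2) * x₂ t -
          x₁ t * (-D + B * (x₁ t / x₂ t))) / (x₂ t) ^ 2) / (x₁ t / x₂ t - y₁)) t :=
      (hy.sub_const y₁).log hne1
    have h3 : HasDerivAt (fun t => Real.log (y₂ - x₁ t / x₂ t))
        ((-(((-C - A * (x₁ t / x₂ t) ^ 2) * x₂ t -
          x₁ t * (-D + B * (x₁ t / x₂ t))) / (x₂ t) ^ 2)) / (y₂ - x₁ t / x₂ t)) t :=
      (hy.const_sub y₂).log hne2
    have h := (h1.neg.add (h2.const_mul p)).add (h3.const_mul q)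
    have hzero : -((-D + B * (x₁ t / x₂ t)) / x₂ t) +
        p * ((((-C - A * (x₁ t / x₂ t) ^ 2) * x₂ t -
          x₁ t * (-D + B * (x₁ t / x₂ t))) / (x₂ t) ^ 2) / (x₁ t / x₂ t - y₁)) +
        q * ((-(((-C - A * (x₁ t / x₂ t) ^ 2) * x₂ t -
          x₁ t * (-D + B * (x₁ t / x₂ t))) / (x₂ t) ^ 2)) / (y₂ - x₁ t / x₂ t)) = 0 := by
      have hY : x₁ t = x₁ t / x₂ t * x₂ t := (div_mul_cancel₀ _ hv).symm
      set Y := x₁ t / x₂ t with hYdef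
      have hyd : ((-C - A * Y ^ 2) * x₂ t - x₁ t * (-D + B * Y)) / (x₂ t) ^ 2
          = (A + B) * (Y - y₁) * (y₂ - Y) / x₂ t := by
        rw [hY, hCv, hDv]
        field_simp
        ring
      rw [hyd, hp, hq, hDv]
      field_simp
      ring
    rw [← hzero]
    exact h
  -- g is constant on I
  have hconst : ∀ s ∈ I, ∀ t ∈ I, s ≤ t → g s = g t := by
    intro s hs t ht hst
    have hsub : Set.Icc s t ⊆ I := hI.out hs ht
    have hcont : ContinuousOn g (Set.Icc s t) := fun x hx =>
      ((hgderiv x (hsub hx)).continuousAt).continuousWithinAt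
    have hd : ∀ x ∈ Set.Ico s t, HasDerivWithinAt g 0 (Set.Ici x) x := fun x hx =>
      (hgderiv x (hsub ⟨hx.1, hx.2.le⟩)).hasDerivWithinAt
    exact (constant_of_has_deriv_right_zero hcont hd t ⟨hst, le_rfl⟩).symm
  -- express the quantity as exp (g t)
  have hexp : ∀ t ∈ I,
      (1 / x₂ t) * |x₁ t / x₂ t - y₁| ^ p * |y₂ - x₁ t / x₂ t| ^ q = Real.exp (g t) := by
    intro t ht
    have hv : 0 < x₂ t := hpos₂ t ht
    have hne1 : x₁ t / x₂ t - y₁ ≠ 0 := sub_ne_zero.2 (hne t ht).1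
    have hne2 : y₂ - x₁ t / x₂ t ≠ 0 := sub_ne_zero.2 (Ne.symm (hne t ht).2)
    have e1 : (1 : ℝ) / x₂ t = Real.exp (-Real.log (x₂ t)) := by
      rw [Real.exp_neg, Real.exp_log hv, one_div]
    have e2 : |x₁ t / x₂ t - y₁| ^ p =
        Real.exp (p * Real.log (x₁ t / x₂ t - y₁)) := by
      rw [Real.rpow_def_of_pos (abs_pos.2 hne1), Real.log_abs, mul_comm]
    have e3 : |y₂ - x₁ t / x₂ t| ^ q =
        Real.exp (q * Real.log (y₂ - x₁ t / x₂ t)) := by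
      rw [Real.rpow_def_of_pos (abs_pos.2 hne2), Real.log_abs, mul_comm]
    rw [e1, e2, e3, ← Real.exp_add, ← Real.exp_add]
  intro s hs t ht
  rw [hexp s hs, hexp t ht]
  rcases le_total s t with h | h
  · rw [hconst s hs t ht h]
  · rw [hconst t ht s hs h]
end

section
/- Let A₁, A₂, B₁, B₂, C₁, C₂ > 0. Then every real root of the cubic -(B₂ + C₁)·y³ + A₂·y² - A₁·y + (B₁ + C₂) = 0 is strictly positive, and the cubic has at least one real root. -/
theorem stmt13 (A₁ A₂ B₁ B₂ C₁ C₂ : ℝ)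
    (hA₁ : 0 < A₁) (hA₂ : 0 < A₂) (hB₁ : 0 < B₁) (hB₂ : 0 < B₂)
    (hC₁ : 0 < C₁) (hC₂ : 0 < C₂) :
    (∀ y : ℝ, -(B₂ + C₁) * y ^ 3 + A₂ * y ^ 2 - A₁ * y + (B₁ + C₂) = 0 → 0 < y) ∧
    (∃ y : ℝ, -(B₂ + C₁) * y ^ 3 + A₂ * y ^ 2 - A₁ * y + (B₁ + C₂) = 0) := by
  constructor
  · intro y hy
    by_contra h
    push_neg at h
    nlinarith [mul_nonneg (mul_nonneg (neg_nonneg.2 h) (neg_nonneg.2 h)) (neg_nonneg.2 h),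
      mul_nonneg (neg_nonneg.2 h) (neg_nonneg.2 h)]
  · set f : ℝ → ℝ := fun y => -(B₂ + C₁) * y ^ 3 + A₂ * y ^ 2 - A₁ * y + (B₁ + C₂) with hf
    have hcont : ContinuousOn f (Set.Icc 0 ((A₂ + B₁ + C₂) / (B₂ + C₁) + 1)) := by
      fun_prop
    set M : ℝ := (A₂ + B₁ + C₂) / (B₂ + C₁) + 1 with hM
    have hMpos : (0:ℝ) ≤ M := by positivity
    have hM1 : (1:ℝ) ≤ M := by
      have : 0 ≤ (A₂ + B₁ + C₂) / (B₂ + C₁) := by positivity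
      rw [hM]; linarith
    have key : (B₂ + C₁) * M = A₂ + B₁ + C₂ + (B₂ + C₁) := by
      rw [hM]; field_simp
    have hfM : f M ≤ 0 := by
      simp only [hf]
      nlinarith [sq_nonneg M, mul_pos hA₁ (lt_of_lt_of_le one_pos hM1),
        mul_le_mul_of_nonneg_left (mul_le_mul_of_nonneg_left hM1 hMpos) (le_of_lt (by positivity : (0:ℝ) < B₂ + C₁))]
    have hf0 : 0 ≤ f 0 := by simp [hf]; positivity
    have := intermediate_value_Icc' hMpos hcont (Set.mem_Icc.2 ⟨hfM, hf0⟩)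
    obtain ⟨y, _, hy⟩ := this
    exact ⟨y, hy⟩
end
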